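/- Let N ≥ 2, P ∈ (1/N, 1], and M = ⌊1/P⌋ (so 1 ≤ M ≤ N−1). The set of extreme points of the convex polytope PT_P = { q ∈ ℝ^{N−1} : 0 ≤ q_k ≤ P for all k, Σ_{k=1}^{N−1} q_k = 1−P } is exactly the set of vectors obtained by permuting the coordinates of the (N−1)-dimensional vector having M−1 components equal to P, one component equal to 1 − M P, and N−M−1 components equal to zero; in particular each edge of the hypercube [0, P]^{N−1} contains at most one vertex of PT_P. -/

import Mathlib

open scoped BigOperators

noncomputable section

open Finset

-- general perm lemma
theorem exists_perm_of_fiber {α β : Type*} [Fintype α] [DecidableEq α] [DecidableEq β] (f g : α → β)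
    (h : ∀ b, Fintype.card {x // f x = b} = Fintype.card {x // g x = b}) :
    ∃ σ : Equiv.Perm α, f = g ∘ σ := by
  have e : ∀ b, {x // f x = b} ≃ {x // g x = b} := fun b => Fintype.equivOfCardEq (h b)
  refine ⟨((Equiv.sigmaFiberEquiv f).symm.trans (Equiv.sigmaCongrRight e)).trans
    (Equiv.sigmaFiberEquiv g), funext fun x => ?_⟩
  exact ((e (f x)) ⟨x, rfl⟩).2.symm
theorem fiber_card {n : ℕ} (P c b : ℝ) (m : ℕ) (A : Finset (Fin n)) (i : Fin n)
    (hA : A.card = m) (hi : i ∉ A)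
    (q : Fin n → ℝ) (hq : ∀ k, q k = if k ∈ A then P else if k = i then c else 0) :
    Fintype.card {x // q x = b} =
      (if P = b then m else 0) + (if c = b then 1 else 0) + (if (0:ℝ) = b then n - m - 1 else 0) := by
  classical
  rw [Fintype.card_subtype, Finset.card_filter]
  have hsub : insert i A ⊆ univ := subset_univ _
  rw [← Finset.sum_sdiff hsub, Finset.sum_insert hi]
  have h1 : ∑ x ∈ univ \ insert i A, (if q x = b then 1 else 0) =
      if (0:ℝ) = b then n - m - 1 else 0 := by
    have : ∀ x ∈ univ \ insert i A, (if q x = b then 1 else 0) = if (0:ℝ) = b then 1 else 0 := by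
      intro x hx
      simp only [mem_sdiff, mem_insert, not_or] at hx
      rw [hq x, if_neg hx.2.2, if_neg hx.2.1]
    rw [Finset.sum_congr rfl this, Finset.sum_const, Finset.card_sdiff_of_subset hsub,
      Finset.card_insert_of_notMem hi, hA, Finset.card_univ, Fintype.card_fin]
    split_ifs <;> simp [Nat.sub_sub]
  have h2 : (if q i = b then 1 else 0) = if c = b then 1 else 0 := by
    rw [hq i, if_neg hi, if_pos rfl]
  have h3 : ∑ x ∈ A, (if q x = b then 1 else 0) = if P = b then m else 0 := by
    have : ∀ x ∈ A, (if q x = b then 1 else 0) = if P = b then 1 else 0 := by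
      intro x hx; rw [hq x, if_pos hx]
    rw [Finset.sum_congr rfl this, Finset.sum_const, hA]
    split_ifs <;> simp
  rw [h1, h2, h3]
  split_ifs <;> omega

theorem canon_sum {n : ℕ} (P c : ℝ) (m : ℕ) (A : Finset (Fin n)) (i : Fin n)
    (hA : A.card = m) (hi : i ∉ A)
    (q : Fin n → ℝ) (hq : ∀ k, q k = if k ∈ A then P else if k = i then c else 0) :
    ∑ k, q k = (m : ℝ) * P + c := by
  classical
  have hsub : insert i A ⊆ univ := subset_univ _
  rw [← Finset.sum_sdiff hsub, Finset.sum_insert hi]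
  have h1 : ∑ x ∈ univ \ insert i A, q x = 0 := by
    apply Finset.sum_eq_zero
    intro x hx
    simp only [mem_sdiff, mem_insert, not_or] at hx
    rw [hq x, if_neg hx.2.2, if_neg hx.2.1]
  have h2 : q i = c := by rw [hq i, if_neg hi, if_pos rfl]
  have h3 : ∑ x ∈ A, q x = (m : ℝ) * P := by
    rw [Finset.sum_congr rfl fun x hx => by rw [hq x, if_pos hx], Finset.sum_const, hA,
      nsmul_eq_mul]
  rw [h1, h2, h3]; ring

theorem comb_le (a b u v w : ℝ) (ha : 0 < a) (hb : 0 < b) (hab : a + b = 1)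
    (hu : u ≤ w) (hv : v ≤ w) (h : a * u + b * v = w) : u = w ∧ v = w := by
  have hw : a * w + b * w = w := by have := congrArg (· * w) hab; simpa [add_mul] using this
  have h1 : a * (w - u) + b * (w - v) = 0 := by rw [mul_sub, mul_sub]; linarith
  have h2 : 0 ≤ a * (w - u) := mul_nonneg ha.le (by linarith)
  have h3 : 0 ≤ b * (w - v) := mul_nonneg hb.le (by linarith)
  have h4 : a * (w - u) = 0 := by linarith
  have h5 : b * (w - v) = 0 := by linarith
  have h6 : w - u = 0 := (mul_eq_zero.1 h4).resolve_left (ne_of_gt ha)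
  have h7 : w - v = 0 := (mul_eq_zero.1 h5).resolve_left (ne_of_gt hb)
  constructor <;> linarith

theorem canon_mem_extreme {n : ℕ} (P c S : ℝ) (hP0 : 0 ≤ P) (hc0 : 0 ≤ c) (hcP : c ≤ P)
    (m : ℕ) (A : Finset (Fin n)) (i : Fin n) (hA : A.card = m) (hi : i ∉ A)
    (q : Fin n → ℝ) (hq : ∀ k, q k = if k ∈ A then P else if k = i then c else 0)
    (hsum : (m : ℝ) * P + c = S)
    (PT : Set (Fin n → ℝ))
    (hPT : PT = {q : Fin n → ℝ | (∀ k, 0 ≤ q k ∧ q k ≤ P) ∧ ∑ k, q k = S}) :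
    q ∈ Set.extremePoints ℝ PT := by
  classical
  have hqmem : q ∈ PT := by
    rw [hPT]
    refine ⟨fun k => ?_, by rw [canon_sum P c m A i hA hi q hq, hsum]⟩
    rw [hq k]; split_ifs <;> constructor <;> linarith
  rw [mem_extremePoints]
  refine ⟨hqmem, fun x₁ hx₁ x₂ hx₂ hseg => ?_⟩
  rw [hPT] at hx₁ hx₂
  obtain ⟨a, b, ha, hb, hab, hxy⟩ := hseg
  have hco : ∀ k, a * x₁ k + b * x₂ k = q k := fun k => by
    have := congr_fun hxy k
    simpa using this
  have hoff : ∀ k, k ≠ i → x₁ k = q k ∧ x₂ k = q k := by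
    intro k hk
    by_cases hkA : k ∈ A
    · have hqk : q k = P := by rw [hq k, if_pos hkA]
      rw [hqk]
      exact comb_le a b _ _ _ ha hb hab (hx₁.1 k).2 (hx₂.1 k).2 (by rw [hco k, hqk])
    · have hqk : q k = 0 := by rw [hq k, if_neg hkA, if_neg hk]
      rw [hqk]
      have := comb_le a b (-(x₁ k)) (-(x₂ k)) 0 ha hb hab (by linarith [(hx₁.1 k).1])
        (by linarith [(hx₂.1 k).1]) (by rw [← neg_zero, ← hqk, ← hco k]; ring)
      constructor <;> linarith [this.1, this.2]
  have hsums : ∀ (x : Fin n → ℝ), (∀ k, k ≠ i → x k = q k) → ∑ k, x k = S → x = q := by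
    intro x hxq hs
    have hqsum : ∑ k, q k = S := by rw [canon_sum P c m A i hA hi q hq, hsum]
    have hi' : i ∈ (univ : Finset (Fin n)) := mem_univ i
    have e1 := Finset.add_sum_erase univ x hi'
    have e2 := Finset.add_sum_erase univ q hi'
    have he : ∑ k ∈ univ.erase i, x k = ∑ k ∈ univ.erase i, q k :=
      Finset.sum_congr rfl fun k hk => hxq k (Finset.ne_of_mem_erase hk)
    have : x i = q i := by rw [hs] at e1; rw [hqsum] at e2; linarith
    funext k
    by_cases hk : k = i
    · rw [hk]; exact this
    · exact hxq k hk
  exact ⟨hsums x₁ (fun k hk => (hoff k hk).1) hx₁.2, hsums x₂ (fun k hk => (hoff k hk).2) hx₂.2⟩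

theorem extreme_canon {n : ℕ} (P : ℝ) (hP0 : 0 < P) (M : ℕ) (hM : M = ⌊1 / P⌋₊)
    (hM1 : 1 ≤ M) (hMn : M ≤ n)
    (PT : Set (Fin n → ℝ))
    (hPT : PT = { q : Fin n → ℝ | (∀ k, 0 ≤ q k ∧ q k ≤ P) ∧ ∑ k, q k = 1 - P })
    (q : Fin n → ℝ) (hq : q ∈ Set.extremePoints ℝ PT) :
    ∃ (A : Finset (Fin n)) (i : Fin n), A.card = M - 1 ∧ i ∉ A ∧
      ∀ k, q k = if k ∈ A then P else if k = i then 1 - (M : ℝ) * P else 0 := by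
  classical
  rw [mem_extremePoints, hPT] at hq
  obtain ⟨⟨hbd, hsum⟩, hext⟩ := hq
  -- at most one fractional coordinate
  have hfrac : ∀ i j : Fin n, i ≠ j → 0 < q i → q i < P → 0 < q j → q j < P → False := by
    intro i j hij hi0 hiP hj0 hjP
    set δ : ℝ := min (min (q i) (P - q i)) (min (q j) (P - q j)) with hδ
    have d1 : δ ≤ q i := le_trans (min_le_left _ _) (min_le_left _ _)
    have d2 : δ ≤ P - q i := le_trans (min_le_left _ _) (min_le_right _ _)
    have d3 : δ ≤ q j := le_trans (min_le_right _ _) (min_le_left _ _)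
    have d4 : δ ≤ P - q j := le_trans (min_le_right _ _) (min_le_right _ _)
    have dpos : 0 < δ := by
      apply lt_min <;> apply lt_min <;> linarith
    set x₁ : Fin n → ℝ := fun k =>
      q k + (if k = i then δ else 0) - (if k = j then δ else 0) with hx1
    set x₂ : Fin n → ℝ := fun k =>
      q k - (if k = i then δ else 0) + (if k = j then δ else 0) with hx2
    have hx1m : x₁ ∈ { q : Fin n → ℝ | (∀ k, 0 ≤ q k ∧ q k ≤ P) ∧ ∑ k, q k = 1 - P } := by
      constructor
      · intro k
        rw [hx1]
        dsimp only
        split_ifs with h1 h2 h2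
        · exact absurd (h1.symm.trans h2) hij
        · rw [h1]; constructor <;> linarith
        · rw [h2]; constructor <;> linarith
        · simpa using hbd k
      · rw [hx1]
        dsimp only
        rw [Finset.sum_sub_distrib, Finset.sum_add_distrib]
        simp [Finset.sum_ite_eq', hsum]
    have hx2m : x₂ ∈ { q : Fin n → ℝ | (∀ k, 0 ≤ q k ∧ q k ≤ P) ∧ ∑ k, q k = 1 - P } := by
      constructor
      · intro k
        rw [hx2]
        dsimp only
        split_ifs with h1 h2 h2
        · exact absurd (h1.symm.trans h2) hij
        · rw [h1]; constructor <;> linarith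
        · rw [h2]; constructor <;> linarith
        · simpa using hbd k
      · rw [hx2]
        dsimp only
        rw [Finset.sum_add_distrib, Finset.sum_sub_distrib]
        simp [Finset.sum_ite_eq', hsum]
    have hseg : q ∈ openSegment ℝ x₁ x₂ := by
      refine ⟨1/2, 1/2, by norm_num, by norm_num, by norm_num, ?_⟩
      funext k
      rw [hx1, hx2]
      simp only [Pi.add_apply, Pi.smul_apply, smul_eq_mul]
      ring
    have := (hext x₁ hx1m x₂ hx2m hseg).1
    have hxi : x₁ i = q i + δ := by
      rw [hx1]; dsimp only; rw [if_pos rfl, if_neg hij]; ring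
    rw [this] at hxi
    linarith
  -- decompose
  set A : Finset (Fin n) := univ.filter (fun k => q k = P) with hA
  set B : Finset (Fin n) := univ.filter (fun k => q k ≠ P ∧ q k ≠ 0) with hB
  have hABd : Disjoint A B := by
    rw [Finset.disjoint_left]
    intro a haA haB
    rw [hA, mem_filter] at haA
    rw [hB, mem_filter] at haB
    exact haB.2.1 haA.2
  have hBfrac : ∀ k ∈ B, 0 < q k ∧ q k < P := by
    intro k hk
    rw [hB, mem_filter] at hk
    exact ⟨lt_of_le_of_ne (hbd k).1 (Ne.symm hk.2.2), lt_of_le_of_ne (hbd k).2 hk.2.1⟩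
  have hBcard : B.card ≤ 1 := by
    rw [Finset.card_le_one]
    intro a ha b hb
    by_contra hab
    obtain ⟨ha0, haP⟩ := hBfrac a ha
    obtain ⟨hb0, hbP⟩ := hBfrac b hb
    exact hfrac a b hab ha0 haP hb0 hbP
  have hzero : ∀ k, k ∉ A → k ∉ B → q k = 0 := by
    intro k hkA hkB
    rw [hA, mem_filter] at hkA
    rw [hB, mem_filter] at hkB
    push_neg at hkA hkB
    by_contra h
    exact h (hkB (mem_univ k) (fun hP => hkA (mem_univ k) hP) ▸ rfl)
  have hkey : (A.card : ℝ) * P + ∑ k ∈ B, q k = 1 - P := by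
    have hsub : A ∪ B ⊆ univ := subset_univ _
    rw [← hsum, ← Finset.sum_sdiff hsub, Finset.sum_union hABd]
    have h0 : ∑ k ∈ univ \ (A ∪ B), q k = 0 := by
      apply Finset.sum_eq_zero
      intro k hk
      rw [mem_sdiff, Finset.mem_union] at hk
      push_neg at hk
      exact hzero k hk.2.1 hk.2.2
    have hAP : ∑ k ∈ A, q k = (A.card : ℝ) * P := by
      rw [← nsmul_eq_mul, ← Finset.sum_const]
      apply Finset.sum_congr rfl
      intro k hk
      rw [hA, mem_filter] at hk
      exact hk.2
    rw [h0, hAP]; ring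
  by_cases hBe : B = ∅
  · -- no fractional coordinate
    rw [hBe, Finset.sum_empty, add_zero] at hkey
    have hMa : M = A.card + 1 := by
      have h1P : 1 / P = ((A.card + 1 : ℕ) : ℝ) := by
        push_cast
        field_simp
        linarith
      rw [hM, h1P, Nat.floor_natCast]
    have hc : 1 - (M : ℝ) * P = 0 := by
      rw [hMa]; push_cast; nlinarith [hkey]
    obtain ⟨i, hi⟩ : ∃ i, i ∉ A := by
      by_contra h
      push_neg at h
      have := Finset.eq_univ_iff_forall.2 h
      have hcard := congrArg Finset.card this
      rw [Finset.card_univ, Fintype.card_fin] at hcard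
      omega
    refine ⟨A, i, by omega, hi, fun k => ?_⟩
    by_cases hk : k ∈ A
    · rw [if_pos hk, hA, mem_filter] at *
      exact hk.2
    · rw [if_neg hk]
      have := hzero k hk (by rw [hBe]; exact notMem_empty k)
      rw [this, hc]
      split_ifs <;> rfl
  · obtain ⟨i, hBi⟩ := Finset.card_eq_one.1 (le_antisymm hBcard (Finset.card_pos.2 (Finset.nonempty_iff_ne_empty.2 hBe)))
    rw [hBi, Finset.sum_singleton] at hkey
    obtain ⟨hi0, hiP⟩ := hBfrac i (by rw [hBi]; exact mem_singleton_self i)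
    have hMa : M = A.card + 1 := by
      rw [hM]
      rw [Nat.floor_eq_iff (by positivity)]
      constructor
      · rw [le_div_iff₀ hP0]; push_cast; nlinarith [hkey]
      · rw [div_lt_iff₀ hP0]; push_cast; nlinarith [hkey]
    have hqi : q i = 1 - (M : ℝ) * P := by
      rw [hMa]; push_cast; linarith [hkey]
    have hiA : i ∉ A := Finset.disjoint_right.1 hABd (by rw [hBi]; exact mem_singleton_self i)
    refine ⟨A, i, by omega, hiA, fun k => ?_⟩
    by_cases hk : k ∈ A
    · rw [if_pos hk]
      rw [hA, mem_filter] at hk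
      exact hk.2
    · rw [if_neg hk]
      by_cases hki : k = i
      · rw [if_pos hki, hki]; exact hqi
      · rw [if_neg hki]
        exact hzero k hk (by rw [hBi, mem_singleton]; exact hki)


/-- For `N ≥ 2`, `P ∈ (1/N, 1]` and `M = ⌊1/P⌋`, the extreme points of the
polytope `PT_P = {q ∈ ℝ^{N−1} : 0 ≤ q_k ≤ P, Σ q_k = 1−P}` are exactly the permutations of
the vector with `M−1` components equal to `P`, one equal to `1 − MP`, and the rest zero;
in particular, each edge of the hypercube `[0,P]^{N−1}` contains at most one vertex of `PT_P`. -/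
theorem extremePoints_of_polytope {N : ℕ} (hN : 2 ≤ N) (P : ℝ)
    (hP : P ∈ Set.Ioc (1 / (N : ℝ)) 1) (M : ℕ) (hM : M = ⌊1 / P⌋₊)
    (PT : Set (Fin (N - 1) → ℝ))
    (hPT : PT = { q : Fin (N - 1) → ℝ | (∀ k, 0 ≤ q k ∧ q k ≤ P) ∧ ∑ k, q k = 1 - P })
    (v : Fin (N - 1) → ℝ)
    (hv : v = fun k : Fin (N - 1) =>
      if (k : ℕ) < M - 1 then P else if (k : ℕ) = M - 1 then 1 - (M : ℝ) * P else 0) :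
    Set.extremePoints ℝ PT = { q | ∃ σ : Equiv.Perm (Fin (N - 1)), q = v ∘ σ } ∧
    ∀ (k0 : Fin (N - 1)) (ε : Fin (N - 1) → Bool),
      Set.Subsingleton
        { q ∈ Set.extremePoints ℝ PT | ∀ k, k ≠ k0 → q k = if ε k then P else 0 } := by
  classical
  -- numeric facts
  have hN0 : (0:ℝ) < N := by exact_mod_cast (by omega : 0 < N)
  have hP0 : 0 < P := lt_trans (by positivity) hP.1
  have hinv1 : 1 ≤ 1 / P := by rw [le_div_iff₀ hP0]; linarith [hP.2]
  have hinvN : 1 / P < N := by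
    rw [div_lt_iff₀ hP0]
    have := (div_lt_iff₀ hN0).1 hP.1
    linarith
  have hM1 : 1 ≤ M := by rw [hM]; exact Nat.le_floor (by exact_mod_cast hinv1)
  have hMN : M < N := by
    have h1 : (M:ℝ) ≤ 1 / P := by rw [hM]; exact Nat.floor_le (by positivity)
    have : (M:ℝ) < N := lt_of_le_of_lt h1 hinvN
    exact_mod_cast this
  have hMn : M ≤ N - 1 := by omega
  have hMP : (M:ℝ) * P ≤ 1 := by
    have h1 : (M:ℝ) ≤ 1 / P := by rw [hM]; exact Nat.floor_le (by positivity)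
    rw [le_div_iff₀ hP0] at h1; linarith
  have hMP2 : 1 < ((M:ℝ) + 1) * P := by
    have h1 : 1 / P < (M:ℝ) + 1 := by
      rw [hM]; exact_mod_cast Nat.lt_floor_add_one (1 / P)
    rw [div_lt_iff₀ hP0] at h1; linarith
  set c : ℝ := 1 - (M:ℝ) * P with hc
  have hc0 : 0 ≤ c := by rw [hc]; linarith
  have hcP : c < P := by rw [hc]; nlinarith [hMP2]
  have hcast : ((M - 1 : ℕ) : ℝ) = (M:ℝ) - 1 := by
    rw [Nat.cast_sub hM1, Nat.cast_one]
  have hsumv : ((M - 1 : ℕ) : ℝ) * P + c = 1 - P := by rw [hcast, hc]; ring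
  -- canonical form of v
  have him : M - 1 < N - 1 := by omega
  set iv : Fin (N - 1) := ⟨M - 1, him⟩ with hiv
  set Av : Finset (Fin (N - 1)) := univ.filter (fun k : Fin (N - 1) => (k : ℕ) < M - 1) with hAv
  have hAvcard : Av.card = M - 1 := by
    have : Av = Finset.Iio iv := by
      ext k
      simp [hAv, Finset.mem_Iio, Fin.lt_def, hiv]
    rw [this, Fin.card_Iio]
  have hivAv : iv ∉ Av := by simp [hAv, hiv, Nat.sub_add_cancel hM1]
  have hformv : ∀ k, v k = if k ∈ Av then P else if k = iv then c else 0 := by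
    intro k
    rw [hv]
    have h1 : (k ∈ Av) ↔ ((k:ℕ) < M - 1) := by simp [hAv]
    have h2 : (k = iv) ↔ ((k:ℕ) = M - 1) := by rw [Fin.ext_iff]
    simp only [h1, h2, hc]
  constructor
  · ext q
    simp only [Set.mem_setOf_eq]
    constructor
    · intro hq
      obtain ⟨A, i, hA, hi, hform⟩ := extreme_canon P hP0 M hM hM1 hMn PT hPT q hq
      exact exists_perm_of_fiber q v (fun b => by
        rw [fiber_card P c b (M - 1) A i hA hi q (by simpa [hc] using hform),
          fiber_card P c b (M - 1) Av iv hAvcard hivAv v hformv])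
    · rintro ⟨σ, rfl⟩
      set A' : Finset (Fin (N - 1)) := Av.map σ.symm.toEmbedding with hA'
      have hA'card : A'.card = M - 1 := by rw [hA', Finset.card_map, hAvcard]
      have hi' : σ.symm iv ∉ A' := by
        rw [hA', Finset.mem_map_equiv]
        simpa using hivAv
      have hform' : ∀ k, (v ∘ σ) k = if k ∈ A' then P else if k = σ.symm iv then c else 0 := by
        intro k
        rw [Function.comp_apply, hformv (σ k)]
        have h1 : (σ k ∈ Av) ↔ (k ∈ A') := by
          rw [hA', Finset.mem_map_equiv, Equiv.symm_symm]
        have h2 : (σ k = iv) ↔ (k = σ.symm iv) := σ.apply_eq_iff_eq_symm_apply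
        simp only [h1, h2]
      exact canon_mem_extreme P c (1 - P) hP0.le hc0 hcP.le (M - 1) A' (σ.symm iv)
        hA'card hi' (v ∘ σ) hform' hsumv PT hPT
  · intro k0 ε q hq q' hq'
    have hqPT : q ∈ PT := hq.1.1
    have hq'PT : q' ∈ PT := hq'.1.1
    rw [hPT] at hqPT hq'PT
    have hoff : ∀ k, k ≠ k0 → q k = q' k := by
      intro k hk
      rw [hq.2 k hk, hq'.2 k hk]
    have hk0 : k0 ∈ (univ : Finset (Fin (N - 1))) := mem_univ k0
    have e1 := Finset.add_sum_erase univ q hk0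
    have e2 := Finset.add_sum_erase univ q' hk0
    have he : ∑ k ∈ univ.erase k0, q k = ∑ k ∈ univ.erase k0, q' k :=
      Finset.sum_congr rfl fun k hk => hoff k (Finset.ne_of_mem_erase hk)
    have hqq' : q k0 = q' k0 := by
      rw [hqPT.2] at e1; rw [hq'PT.2] at e2; linarith
    funext k
    by_cases hk : k = k0
    · rw [hk]; exact hqq'
    · exact hoff k hk
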